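/- Let A be a line arrangement, let P be a multiple point of A whose vertex has degree at most 2 in the graph G_A, and let A_P = {ℓ ∈ A : the point P lies on ℓ}. If the subarrangement A∖A_P is inductively connected, then A is inductively connected. -/

import Mathlib

noncomputable section
attribute [local instance] Classical.propDecidable

/-- The projective plane: points of `ℙ(ℂ³)`.  A "line" of `ℂP²` with equation
`a x + b y + c z = 0` is identified with the point `(a : b : c)` of the dual plane. -/
abbrev ProjPlane := Projectivization ℂ (Fin 3 → ℂ)

/-- The line `l = (a : b : c)` passes through the point `q = (x : y : z)`,
i.e. `a x + b y + c z = 0` (well defined on representatives). -/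
def incident (l q : ProjPlane) : Prop := ∑ t : Fin 3, l.rep t * q.rep t = 0

/-- The set of indices of lines of the arrangement `A` passing through `q`. -/
def pointSet {ι : Type} [Fintype ι] [DecidableEq ι] (A : ι → ProjPlane) (q : ProjPlane) :
    Finset ι :=
  Finset.univ.filter fun i => incident (A i) q

/-- The combinatorics of the arrangement `A`: the collection of the sets `P(q)` of lines
through `q`, for the points `q` lying on at least two lines (the singular points). -/
def combinatorics {ι : Type} [Fintype ι] [DecidableEq ι] (A : ι → ProjPlane) :
    Finset (Finset ι) :=
  Finset.univ.filter fun P => 2 ≤ P.card ∧ ∃ q, P = pointSet A q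

/-- `τ_i(A, ω)`: the number of singular points of the subarrangement formed by the lines
placed before position `i` that lie on the line placed at position `i` (positions are
`0`-based, given by the order `ω`). -/
def tauArr {ι : Type} [Fintype ι] [DecidableEq ι] (A : ι → ProjPlane) {N : ℕ}
    (ω : ι ≃ Fin N) (i : Fin N) : ℕ :=
  ((combinatorics A).filter fun P =>
    ω.symm i ∈ P ∧ 2 ≤ (P.filter fun j => ω j < i).card).card

/-- An arrangement is inductively connected if it admits an order `ω` with `τ_i ≤ 2`
for all `i`. -/
def InductivelyConnectedArr {ι : Type} [Fintype ι] [DecidableEq ι] (A : ι → ProjPlane) : Prop :=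
  ∃ ω : ι ≃ Fin (Fintype.card ι), ∀ i, tauArr A ω i ≤ 2

/- ### auxiliary lemmas -/

/-- Two distinct projective points have linearly independent representatives. -/
lemma aux_rep_indep {p₁ p₂ : ProjPlane} (h : p₁ ≠ p₂) :
    LinearIndependent ℂ ![p₁.rep, p₂.rep] := by
  rw [LinearIndependent.pair_iff' p₁.rep_nonzero]
  intro a ha
  apply h
  have ha0 : a ≠ 0 := by rintro rfl; exact p₂.rep_nonzero (by simpa using ha.symm)
  rw [← Projectivization.mk_rep p₁, ← Projectivization.mk_rep p₂]
  rw [Projectivization.mk_eq_mk_iff]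
  exact ⟨(Units.mk0 a ha0)⁻¹, by rw [Units.smul_def, Units.val_inv_eq_inv_val, Units.val_mk0, ← ha, smul_smul, inv_mul_cancel₀ ha0, one_smul]⟩

/-- Two distinct lines determine at most one common point. -/
lemma aux_incident_unique {l₁ l₂ p₁ p₂ : ProjPlane} (hl : l₁ ≠ l₂)
    (h11 : incident l₁ p₁) (h21 : incident l₂ p₁)
    (h12 : incident l₁ p₂) (h22 : incident l₂ p₂) : p₁ = p₂ := by
  by_contra hp
  apply hl
  set M : Matrix (Fin 2) (Fin 3) ℂ := Matrix.of ![p₁.rep, p₂.rep] with hM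
  have hind : LinearIndependent ℂ (fun i => M.transpose.transpose i) := by
    rw [Matrix.transpose_transpose]
    exact aux_rep_indep hp
  have hrank : M.transpose.rank = 2 := by
    have hinj : Function.Injective M.transpose.mulVecLin := by
      rw [Matrix.coe_mulVecLin]
      exact Matrix.mulVec_injective_iff.2 hind
    have := LinearMap.finrank_range_add_finrank_ker M.transpose.mulVecLin
    rw [LinearMap.ker_eq_bot.2 hinj, finrank_bot] at this
    simpa [Matrix.rank] using this.trans (by simp)
  have hrank' : M.rank = 2 := by rw [← Matrix.rank_transpose M]; exact hrank
  have hker : Module.finrank ℂ (LinearMap.ker M.mulVecLin) = 1 := by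
    have := LinearMap.finrank_range_add_finrank_ker M.mulVecLin
    have h3 : Module.finrank ℂ (Fin 3 → ℂ) = 3 := by simp
    rw [h3] at this
    have : M.rank + Module.finrank ℂ (LinearMap.ker M.mulVecLin) = 3 := this
    omega
  have hmem : ∀ l : ProjPlane, incident l p₁ → incident l p₂ →
      l.rep ∈ LinearMap.ker M.mulVecLin := by
    intro l i1 i2
    rw [LinearMap.mem_ker]
    ext j
    fin_cases j <;>
      simp only [Matrix.mulVecLin_apply, Matrix.mulVec, dotProduct] <;>
      [skip; skip] <;>
      simp only [hM, Matrix.of_apply, Matrix.cons_val', Matrix.cons_val_zero,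
        Matrix.cons_val_one, Matrix.head_cons] <;>
      [exact (by simpa [incident, mul_comm] using i1); exact (by simpa [incident, mul_comm] using i2)]
  have m1 := hmem l₁ h11 h12
  have m2 := hmem l₂ h21 h22
  -- the kernel is 1-dimensional, so l₁.rep and l₂.rep are proportional
  have hv1 : (⟨l₁.rep, m1⟩ : LinearMap.ker M.mulVecLin) ≠ 0 := by
    intro h; exact l₁.rep_nonzero (by simpa using congrArg Subtype.val h)
  obtain ⟨c, hc⟩ := (finrank_eq_one_iff_of_nonzero' (⟨l₁.rep, m1⟩ : LinearMap.ker M.mulVecLin) hv1).1 hker ⟨l₂.rep, m2⟩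
  have hc' : c • l₁.rep = l₂.rep := congrArg Subtype.val hc
  have hc0 : c ≠ 0 := by rintro rfl; exact l₂.rep_nonzero (by simpa using hc'.symm)
  rw [← Projectivization.mk_rep l₁, ← Projectivization.mk_rep l₂,
    Projectivization.mk_eq_mk_iff]
  exact ⟨(Units.mk0 c hc0)⁻¹, by rw [← hc']; simp [Units.smul_def, smul_smul, inv_mul_cancel₀ hc0]⟩

lemma aux_mem_pointSet {ι : Type} [Fintype ι] [DecidableEq ι] {A : ι → ProjPlane}
    {q : ProjPlane} {i : ι} : i ∈ pointSet A q ↔ incident (A i) q := by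
  simp [pointSet]

/-- Two singular sets sharing two distinct lines coincide. -/
lemma aux_pointSet_eq {ι : Type} [Fintype ι] [DecidableEq ι] {A : ι → ProjPlane}
    (hA : Function.Injective A) {q₁ q₂ : ProjPlane} {i j : ι} (hij : i ≠ j)
    (h1 : i ∈ pointSet A q₁) (h2 : j ∈ pointSet A q₁)
    (h3 : i ∈ pointSet A q₂) (h4 : j ∈ pointSet A q₂) : q₁ = q₂ := by
  exact aux_incident_unique (fun h => hij (hA h))
    (aux_mem_pointSet.1 h1) (aux_mem_pointSet.1 h2)
    (aux_mem_pointSet.1 h3) (aux_mem_pointSet.1 h4)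

lemma aux_tau_congr {ι : Type} [Fintype ι] [DecidableEq ι] (A : ι → ProjPlane) {N M : ℕ}
    (h : N = M) (ω : ι ≃ Fin N) (i : Fin N) :
    tauArr A (ω.trans (finCongr h)) (finCongr h i) = tauArr A ω i := by
  subst h
  simp [tauArr, finCongr]

lemma aux_ind_of_perm {n : ℕ} (A : Fin n → ProjPlane) (ω : Fin n ≃ Fin n)
    (h : ∀ i, tauArr A ω i ≤ 2) : InductivelyConnectedArr A := by
  refine ⟨ω.trans (finCongr (Fintype.card_fin n).symm), fun i => ?_⟩
  have hc := aux_tau_congr A (Fintype.card_fin n).symm ω (finCongr (Fintype.card_fin n) i)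
  have : finCongr (Fintype.card_fin n).symm (finCongr (Fintype.card_fin n) i) = i := by
    simp
  rw [this] at hc
  rw [hc]
  exact h _

/-- Let `P = pointSet A q` be a multiple point of `A` whose vertex has
degree at most `2` in `G_A`, and `A_P` the set of lines through `P`.  If `A ∖ A_P` is
inductively connected, then so is `A`. -/
theorem statement8 {n : ℕ} (A : Fin n → ProjPlane) (hA : Function.Injective A)
    (q : ProjPlane) (hmult : 3 ≤ (pointSet A q).card)
    (hdeg : (((combinatorics A).filter fun P' =>
        3 ≤ P'.card ∧ P' ≠ pointSet A q ∧ (P' ∩ pointSet A q).Nonempty)).card ≤ 2)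
    (hsub : InductivelyConnectedArr (fun k : {x : Fin n // x ∉ pointSet A q} => A k.val)) :
    InductivelyConnectedArr A := by
  classical
  set S : Finset (Fin n) := pointSet A q with hSdef
  set T : Finset (Finset (Fin n)) := (combinatorics A).filter fun P' =>
      3 ≤ P'.card ∧ P' ≠ pointSet A q ∧ (P' ∩ pointSet A q).Nonempty with hTdef
  set B : {x : Fin n // x ∉ S} → ProjPlane := fun k => A k.val with hBdef
  set c : ℕ := Fintype.card {x : Fin n // x ∉ S} with hcdef
  set m : ℕ := Fintype.card {x : Fin n // x ∈ S} with hmdef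
  obtain ⟨ω', hω'⟩ := hsub
  have hmS : m = S.card := Fintype.card_coe S
  have hm3 : 3 ≤ m := by omega
  have hcm : c + m = n := by
    have hcn : c = n - m := by
      rw [hcdef, hmdef, Fintype.card_subtype_compl, Fintype.card_fin]
    have hmn : m ≤ n := by
      rw [hmS]
      simpa using S.card_le_univ
    omega
  -- the "bad point" counts
  set bad : Fin n → ℕ := fun x => (T.filter (fun P' => x ∈ P')).card with hbaddef
  have hbad_le : ∀ x, bad x ≤ 2 := fun x =>
    le_trans (Finset.card_le_card (Finset.filter_subset _ _)) hdeg
  have hTone : ∀ P ∈ T, (S.filter (· ∈ P)).card ≤ 1 := by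
    intro P hP
    rw [hTdef, Finset.mem_filter] at hP
    obtain ⟨hPcomb, h3, hPne, hPint⟩ := hP
    rw [combinatorics, Finset.mem_filter] at hPcomb
    obtain ⟨-, -, q', hq'⟩ := hPcomb
    apply Finset.card_le_one.2
    intro a ha b hb
    rw [Finset.mem_filter] at ha hb
    by_contra hab
    apply hPne
    have hqq : q = q' := by
      refine aux_pointSet_eq hA hab ?_ ?_ ?_ ?_
      · exact ha.1
      · exact hb.1
      · rw [← hq']; exact ha.2
      · rw [← hq']; exact hb.2
    rw [hq', ← hqq]
  have hbadsum : ∑ i ∈ S, bad i ≤ 2 := by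
    have heq : ∑ i ∈ S, bad i = ∑ P ∈ T, (S.filter (· ∈ P)).card := by
      simp only [hbaddef, Finset.card_filter]
      rw [Finset.sum_comm]
    rw [heq]
    calc ∑ P ∈ T, (S.filter (· ∈ P)).card ≤ ∑ P ∈ T, 1 := Finset.sum_le_sum hTone
      _ = T.card := by simp
      _ ≤ 2 := hdeg
  have hSne : S.Nonempty := Finset.card_pos.1 (by omega)
  obtain ⟨i₀, hi₀S, hi₀max⟩ := S.exists_max_image bad hSne
  have hheavy : ∀ x ∈ S, x ≠ i₀ → bad x ≤ 1 := by
    intro x hxS hxne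
    by_contra h
    push_neg at h
    have h2 : 2 ≤ bad x := h
    have h2' : 2 ≤ bad i₀ := le_trans h2 (hi₀max x hxS)
    have hsub2 : bad i₀ + bad x ≤ ∑ i ∈ S, bad i := by
      rw [← Finset.sum_pair (Ne.symm hxne)]
      apply Finset.sum_le_sum_of_subset
      intro y hy
      rw [Finset.mem_insert, Finset.mem_singleton] at hy
      rcases hy with rfl | rfl
      · exact hi₀S
      · exact hxS
    omega
  -- the enumeration of S starting with i₀
  set e₁ : {x : Fin n // x ∈ S} ≃ Fin m := Fintype.equivFin _ with he₁
  set eS : {x : Fin n // x ∈ S} ≃ Fin m := e₁.trans (Equiv.swap (e₁ ⟨i₀, hi₀S⟩) ⟨0, by omega⟩) with heS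
  have heS0 : (eS ⟨i₀, hi₀S⟩ : ℕ) = 0 := by simp [heS]
  -- the global order
  set E : Fin n ≃ Fin n :=
    ((Equiv.sumCompl (fun x => x ∈ S)).symm.trans
      ((Equiv.sumComm _ _).trans
        ((Equiv.sumCongr ω' eS).trans
          (finSumFinEquiv.trans (finCongr hcm))))) with hE
  have hposNS : ∀ (x : Fin n) (hx : x ∉ S), (E x : ℕ) = (ω' ⟨x, hx⟩ : ℕ) := by
    intro x hx
    rw [hE]
    simp [Equiv.sumCompl_symm_apply_of_neg hx]
  have hposS : ∀ (x : Fin n) (hx : x ∈ S), (E x : ℕ) = c + (eS ⟨x, hx⟩ : ℕ) := by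
    intro x hx
    rw [hE]
    simp [Equiv.sumCompl_symm_apply_of_pos hx]
    omega
  apply aux_ind_of_perm A E
  intro i
  set x : Fin n := E.symm i with hxdef
  have hix : E x = i := E.apply_symm_apply i
  by_cases hx : x ∈ S
  · -- the line at position i passes through the multiple point q
    set k : ℕ := (eS ⟨x, hx⟩ : ℕ) with hkdef
    have hik : (i : ℕ) = c + k := by rw [← hix]; exact hposS x hx
    -- any member of the filtered family other than S lies in T and contains x
    have hsubT : ∀ P, P ∈ ((combinatorics A).filter fun P =>
        E.symm i ∈ P ∧ 2 ≤ (P.filter fun j => E j < i).card) → P ≠ S →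
        P ∈ T.filter (fun P' => x ∈ P') := by
      intro P hP hPS
      rw [Finset.mem_filter] at hP
      obtain ⟨hPcomb, hxP, hPcard⟩ := hP
      have hxP : x ∈ P := hxP
      have hxnotf : x ∉ P.filter (fun j => E j < i) := by
        rw [Finset.mem_filter]
        rintro ⟨-, hlt⟩
        rw [hix] at hlt
        exact lt_irrefl _ hlt
      have h3P : 3 ≤ P.card := by
        have hins : insert x (P.filter fun j => E j < i) ⊆ P :=
          Finset.insert_subset hxP (Finset.filter_subset _ _)
        have := Finset.card_le_card hins
        rw [Finset.card_insert_of_notMem hxnotf] at this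
        omega
      rw [Finset.mem_filter, hTdef, Finset.mem_filter]
      exact ⟨⟨hPcomb, h3P, hPS, ⟨x, Finset.mem_inter.2 ⟨hxP, hx⟩⟩⟩, hxP⟩
    by_cases hk2 : 2 ≤ k
    · -- x cannot be the max line i₀, hence carries at most one bad point
      have hxi₀ : x ≠ i₀ := by
        intro h
        rw [hkdef] at hk2
        have : (⟨x, hx⟩ : {y : Fin n // y ∈ S}) = ⟨i₀, hi₀S⟩ := Subtype.ext h
        rw [this, heS0] at hk2
        omega
      have hbadx : bad x ≤ 1 := hheavy x hx hxi₀
      calc tauArr A E i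
          ≤ (insert S (T.filter (fun P' => x ∈ P'))).card := by
            apply Finset.card_le_card
            intro P hP
            by_cases hPS : P = S
            · exact hPS ▸ Finset.mem_insert_self _ _
            · exact Finset.mem_insert_of_mem (hsubT P hP hPS)
        _ ≤ (T.filter (fun P' => x ∈ P')).card + 1 := Finset.card_insert_le _ _
        _ ≤ 2 := by
            have : (T.filter (fun P' => x ∈ P')).card = bad x := rfl
            omega
    · -- fewer than two lines through q precede x : S does not yet count
      have hSnot : S ∉ ((combinatorics A).filter fun P =>
          E.symm i ∈ P ∧ 2 ≤ (P.filter fun j => E j < i).card) := by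
        rw [Finset.mem_filter]
        rintro ⟨-, -, hc2⟩
        have hone : (S.filter fun j => E j < i).card ≤ 1 := by
          apply Finset.card_le_one.2
          intro a ha b hb
          rw [Finset.mem_filter] at ha hb
          have hva : (eS ⟨a, ha.1⟩ : ℕ) = 0 := by
            have := hposS a ha.1
            have hlt : (E a : ℕ) < (i : ℕ) := ha.2
            omega
          have hvb : (eS ⟨b, hb.1⟩ : ℕ) = 0 := by
            have := hposS b hb.1
            have hlt : (E b : ℕ) < (i : ℕ) := hb.2
            omega
          have : (⟨a, ha.1⟩ : {y : Fin n // y ∈ S}) = ⟨b, hb.1⟩ :=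
            eS.injective (Fin.ext (hva.trans hvb.symm))
          exact congrArg Subtype.val this
        omega
      calc tauArr A E i
          ≤ (T.filter (fun P' => x ∈ P')).card := by
            apply Finset.card_le_card
            intro P hP
            refine hsubT P hP ?_
            intro h
            exact hSnot (h ▸ hP)
        _ ≤ 2 := hbad_le x
  · -- the line at position i avoids q : compare with the subarrangement
    set k' : Fin c := ω' ⟨x, hx⟩ with hk'def
    have hik : (i : ℕ) = (k' : ℕ) := by rw [← hix]; exact hposNS x hx
    have hic : (i : ℕ) < c := by rw [hik]; exact k'.isLt
    have hltNS : ∀ j : Fin n, E j < i → j ∉ S := by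
      intro j hj hjS
      have h1 := hposS j hjS
      have h2 : (E j : ℕ) < (i : ℕ) := hj
      omega
    have hsymm : ω'.symm k' = ⟨x, hx⟩ := ω'.symm_apply_apply _
    have hps : ∀ q' : ProjPlane,
        (pointSet A q').subtype (fun y => y ∉ S) = pointSet B q' := by
      intro q'
      ext a
      simp only [Finset.mem_subtype, aux_mem_pointSet, hBdef]
    have hfeq : ∀ P : Finset (Fin n),
        (P.filter fun j => E j < i).card
          = ((P.subtype (fun y => y ∉ S)).filter fun j => ω' j < k').card := by
      intro P
      have h1 : (P.subtype (fun y => y ∉ S)).filter (fun j => ω' j < k')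
          = (P.filter fun j => E j < i).subtype (fun y => y ∉ S) := by
        ext a
        simp only [Finset.mem_subtype, Finset.mem_filter]
        have hpos := hposNS a.val a.prop
        rw [Subtype.coe_eta] at hpos
        constructor
        · rintro ⟨haP, hlt⟩
          refine ⟨haP, ?_⟩
          show (E a.val : ℕ) < (i : ℕ)
          have h2 : (ω' a : ℕ) < (k' : ℕ) := hlt
          omega
        · rintro ⟨haP, hlt⟩
          refine ⟨haP, ?_⟩
          show (ω' a : ℕ) < (k' : ℕ)
          have h2 : (E a.val : ℕ) < (i : ℕ) := hlt
          omega
      have h2 : (P.filter fun j => E j < i).filter (fun y => y ∉ S)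
          = P.filter fun j => E j < i :=
        Finset.filter_true_of_mem fun y hy => hltNS y (Finset.mem_filter.1 hy).2
      rw [h1, Finset.card_subtype, h2]
    have hmain : tauArr A E i = tauArr B ω' k' := by
      rw [tauArr, tauArr]
      apply Finset.card_bij (fun P _ => P.subtype (fun y => y ∉ S))
      · intro P hP
        rw [Finset.mem_filter] at hP ⊢
        obtain ⟨hPcomb, hxP, hP2⟩ := hP
        rw [combinatorics, Finset.mem_filter] at hPcomb
        obtain ⟨-, -, q', hq'⟩ := hPcomb
        have hQ2 : 2 ≤ ((P.subtype (fun y => y ∉ S)).filter fun j => ω' j < k').card := by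
          rw [← hfeq P]; exact hP2
        refine ⟨?_, ?_, hQ2⟩
        · rw [combinatorics, Finset.mem_filter]
          refine ⟨Finset.mem_univ _, ?_, q', by rw [hq', hps]⟩
          exact le_trans hQ2 (Finset.card_le_card (Finset.filter_subset _ _))
        · rw [hsymm, Finset.mem_subtype]
          exact hxP
      · intro P₁ hP₁ P₂ hP₂ hQeq
        rw [Finset.mem_filter] at hP₁ hP₂
        obtain ⟨hP₁comb, -, hP₁2⟩ := hP₁
        obtain ⟨hP₂comb, -, -⟩ := hP₂
        rw [combinatorics, Finset.mem_filter] at hP₁comb hP₂comb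
        obtain ⟨-, -, q₁, hq₁⟩ := hP₁comb
        obtain ⟨-, -, q₂, hq₂⟩ := hP₂comb
        obtain ⟨a, ha, b, hb, hab⟩ := Finset.one_lt_card.1 hP₁2
        rw [Finset.mem_filter] at ha hb
        have haS : a ∉ S := hltNS a ha.2
        have hbS : b ∉ S := hltNS b hb.2
        have haP₂ : a ∈ P₂ := by
          have : (⟨a, haS⟩ : {y : Fin n // y ∉ S}) ∈ P₂.subtype (fun y => y ∉ S) := by
            rw [← hQeq, Finset.mem_subtype]; exact ha.1
          rw [Finset.mem_subtype] at this; exact this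
        have hbP₂ : b ∈ P₂ := by
          have : (⟨b, hbS⟩ : {y : Fin n // y ∉ S}) ∈ P₂.subtype (fun y => y ∉ S) := by
            rw [← hQeq, Finset.mem_subtype]; exact hb.1
          rw [Finset.mem_subtype] at this; exact this
        have hq12 : q₁ = q₂ := by
          refine aux_pointSet_eq hA hab ?_ ?_ ?_ ?_
          · rw [← hq₁]; exact ha.1
          · rw [← hq₁]; exact hb.1
          · rw [← hq₂]; exact haP₂
          · rw [← hq₂]; exact hbP₂
        rw [hq₁, hq₂, hq12]
      · intro Q hQ
        rw [Finset.mem_filter] at hQ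
        obtain ⟨hQcomb, hxQ, hQ2⟩ := hQ
        rw [combinatorics, Finset.mem_filter] at hQcomb
        obtain ⟨-, hQcard, q', hq'⟩ := hQcomb
        have himg : (pointSet A q').subtype (fun y => y ∉ S) = Q := by
          rw [hps q', ← hq']
        refine ⟨pointSet A q', ?_, himg⟩
        rw [Finset.mem_filter]
        refine ⟨?_, ?_, ?_⟩
        · rw [combinatorics, Finset.mem_filter]
          refine ⟨Finset.mem_univ _, ?_, q', rfl⟩
          calc 2 ≤ Q.card := hQcard
            _ = ((pointSet A q').subtype (fun y => y ∉ S)).card := by rw [himg]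
            _ = ((pointSet A q').filter (fun y => y ∉ S)).card := Finset.card_subtype _ _
            _ ≤ (pointSet A q').card := Finset.card_le_card (Finset.filter_subset _ _)
        · show E.symm i ∈ pointSet A q'
          have hxQ' : (⟨x, hx⟩ : {y : Fin n // y ∉ S}) ∈ Q := by
            rw [← hsymm]; exact hxQ
          have hx' : (⟨x, hx⟩ : {y : Fin n // y ∉ S}) ∈
              (pointSet A q').subtype (fun y => y ∉ S) := by rw [himg]; exact hxQ'
          rw [Finset.mem_subtype] at hx'
          exact hx'
        · rw [hfeq (pointSet A q'), himg]
          exact hQ2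
    rw [hmain]
    exact hω' k'
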